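/- Let $\kappa \in (0,1)$, $\varepsilon > 0$, $t_1 \geq 1$ an integer. Define $c_p = \min(((1+\kappa)/(2\kappa))^p, p^{(1+\varepsilon)/2})$ for $p \geq 1$, and define the schedule $t_0 = 0$, $t_p = t_{p-1} + \max(\lceil (\kappa^{-2}-1) t_{p-1} \rceil, t_1)$. Then there exists a constant $C > 0$ such that for all $p \geq 2$, $c_p \kappa^p \leq C \, (\log t_p)^{(1+\varepsilon)/2} \, t_p^{-1/2}$. -/

import Mathlib

set_option maxHeartbeats 1000000 in
theorem stmt_3 (κ ε : ℝ) (hκ0 : 0 < κ) (hκ1 : κ < 1) (hε : 0 < ε)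
    (t1 : ℕ) (ht1 : 1 ≤ t1)
    (c : ℕ → ℝ)
    (hc : ∀ p : ℕ, 1 ≤ p →
      c p = min (((1 + κ) / (2 * κ)) ^ p) ((p : ℝ) ^ ((1 + ε) / 2)))
    (t : ℕ → ℕ) (h0 : t 0 = 0)
    (hrec : ∀ p : ℕ, 1 ≤ p →
      t p = t (p - 1) + max (Int.toNat ⌈(κ ^ (-2 : ℤ) - 1) * (t (p - 1) : ℝ)⌉) t1) :
    ∃ C : ℝ, 0 < C ∧ ∀ p : ℕ, 2 ≤ p →
      c p * κ ^ p ≤ C * (Real.log (t p)) ^ ((1 + ε) / 2) * (t p : ℝ) ^ (-(1 : ℝ) / 2) := by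
  have hκ2 : (0:ℝ) < κ ^ 2 := by positivity
  have hκ2lt : κ ^ 2 < 1 := by nlinarith
  set K : ℝ := (κ ^ 2)⁻¹ with hKdef
  have hK1 : 1 < K := (one_lt_inv₀ hκ2).mpr hκ2lt
  have hK0 : 0 < K := lt_trans one_pos hK1
  have hKz : κ ^ (-2 : ℤ) = K := by
    rw [hKdef, zpow_neg]
    norm_num
  -- step bounds
  have hstep : ∀ p : ℕ, 1 ≤ p →
      K * (t (p-1) : ℝ) ≤ (t p : ℝ) ∧ (t p : ℝ) ≤ K * (t (p-1) : ℝ) + (1 + t1) := by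
    intro p hp
    have htn : (0:ℝ) ≤ (t (p-1):ℝ) := Nat.cast_nonneg _
    have hx0 : (0:ℝ) ≤ (K - 1) * (t (p-1) : ℝ) := by nlinarith
    have hceil0 : (0:ℤ) ≤ ⌈(K - 1) * (t (p-1) : ℝ)⌉ := Int.ceil_nonneg hx0
    set N : ℕ := Int.toNat ⌈(K - 1) * (t (p-1) : ℝ)⌉ with hNdef
    have hNeq : (N : ℝ) = ((⌈(K - 1) * (t (p-1) : ℝ)⌉ : ℤ) : ℝ) := by
      rw [hNdef]
      exact_mod_cast congrArg (fun z : ℤ => (z : ℝ)) (Int.toNat_of_nonneg hceil0)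
    have hNlb : (K - 1) * (t (p-1) : ℝ) ≤ (N : ℝ) := by
      rw [hNeq]; exact Int.le_ceil _
    have hNub : (N : ℝ) ≤ (K - 1) * (t (p-1) : ℝ) + 1 := by
      rw [hNeq]; exact le_of_lt (Int.ceil_lt_add_one _)
    have ht := hrec p hp
    rw [hKz] at ht
    have hcast : (t p : ℝ) = (t (p-1) : ℝ) + ((max N t1 : ℕ) : ℝ) := by
      rw [ht]; push_cast; ring
    have hmax1 : (N : ℝ) ≤ ((max N t1 : ℕ) : ℝ) := by exact_mod_cast le_max_left N t1
    have hmax2 : ((max N t1 : ℕ) : ℝ) ≤ (N : ℝ) + t1 := by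
      have : max N t1 ≤ N + t1 := max_le (Nat.le_add_right _ _) (Nat.le_add_left _ _)
      exact_mod_cast this
    constructor
    · nlinarith
    · nlinarith
  have ht1e : t 1 = t1 := by
    have h := hrec 1 le_rfl
    simp [h0] at h
    exact h
  -- lower bound: t1 * K^(p-1) ≤ t p
  have Llow : ∀ p : ℕ, 1 ≤ p → (t1 : ℝ) * K ^ (p - 1) ≤ (t p : ℝ) := by
    intro p hp
    induction p, hp using Nat.le_induction with
    | base => simp [ht1e]
    | succ n hn ih =>
      have hs := (hstep (n+1) (by omega)).1
      simp only [Nat.add_sub_cancel] at hs ⊢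
      have hKn : K ^ n = K * K ^ (n - 1) := by
        rw [← pow_succ', Nat.sub_add_cancel hn]
      rw [hKn]
      calc (t1:ℝ) * (K * K ^ (n-1)) = K * ((t1:ℝ) * K ^ (n-1)) := by ring
        _ ≤ K * (t n : ℝ) := by
            exact mul_le_mul_of_nonneg_left ih (le_of_lt hK0)
        _ ≤ (t (n+1) : ℝ) := hs
  -- upper bound
  set D : ℝ := (1 + t1) / (K - 1) with hDdef
  have hKm1 : (0:ℝ) < K - 1 := by linarith
  have hD0 : 0 < D := by
    apply div_pos _ hKm1; positivity
  have hKD : K * D = D + (1 + t1) := by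
    have h : (K - 1) * D = 1 + t1 := by
      rw [hDdef]; exact mul_div_cancel₀ _ (ne_of_gt hKm1)
    linarith
  set B : ℝ := t1 + D with hBdef
  have hB0 : 0 < B := by
    have : (0:ℝ) < t1 := by exact_mod_cast ht1
    rw [hBdef]; linarith
  have Lup : ∀ p : ℕ, 1 ≤ p → (t p : ℝ) + D ≤ B * K ^ p := by
    intro p hp
    induction p, hp using Nat.le_induction with
    | base =>
      rw [ht1e, pow_one, hBdef]
      nlinarith
    | succ n hn ih =>
      have hs := (hstep (n+1) (by omega)).2
      simp only [Nat.add_sub_cancel] at hs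
      calc (t (n+1) : ℝ) + D ≤ K * (t n : ℝ) + (1 + t1) + D := by linarith
        _ = K * ((t n : ℝ) + D) := by rw [mul_add, hKD]; ring
        _ ≤ K * (B * K ^ n) := mul_le_mul_of_nonneg_left ih (le_of_lt hK0)
        _ = B * K ^ (n+1) := by ring
  -- assemble
  set α : ℝ := (1 + ε) / 2 with hαdef
  have hα0 : 0 < α := by rw [hαdef]; linarith
  set A : ℝ := Real.log K / 2 with hAdef
  have hlogK : 0 < Real.log K := Real.log_pos hK1
  have hA0 : 0 < A := by rw [hAdef]; linarith
  refine ⟨(A ^ α)⁻¹ * Real.sqrt B, by positivity, ?_⟩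
  intro p hp
  have hp1 : 1 ≤ p := by omega
  have htp0 : (0:ℝ) < (t p : ℝ) := by
    have := Llow p hp1
    have h1 : (1:ℝ) ≤ (t1:ℝ) := by exact_mod_cast ht1
    have hKp : (1:ℝ) ≤ K ^ (p-1) := one_le_pow₀ (le_of_lt hK1)
    nlinarith
  have htp1 : K ^ (p-1) ≤ (t p : ℝ) := by
    have := Llow p hp1
    have h1 : (1:ℝ) ≤ (t1:ℝ) := by exact_mod_cast ht1
    have hKp : (0:ℝ) < K ^ (p-1) := pow_pos hK0 _
    nlinarith
  have htp1' : (1:ℝ) ≤ (t p : ℝ) := 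
    le_trans (one_le_pow₀ (le_of_lt hK1)) htp1
  have hlogt0 : 0 ≤ Real.log (t p) := Real.log_nonneg htp1'
  -- log bound
  have hlogt : ((p:ℝ) - 1) * Real.log K ≤ Real.log (t p) := by
    have h := Real.log_le_log (pow_pos hK0 (p-1)) htp1
    rw [Real.log_pow] at h
    have hc' : ((p - 1 : ℕ) : ℝ) = (p:ℝ) - 1 := by
      have : (1:ℕ) ≤ p := hp1
      push_cast [Nat.cast_sub this]
      ring
    rw [hc'] at h
    exact h
  have hpA : (p:ℝ) * A ≤ Real.log (t p) := by
    have h2p : (p:ℝ) ≤ 2 * ((p:ℝ) - 1) := by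
      have : (2:ℝ) ≤ (p:ℝ) := by exact_mod_cast hp
      linarith
    calc (p:ℝ) * A ≤ (2 * ((p:ℝ) - 1)) * A := by
          exact mul_le_mul_of_nonneg_right h2p (le_of_lt hA0)
      _ = ((p:ℝ) - 1) * Real.log K := by rw [hAdef]; ring
      _ ≤ Real.log (t p) := hlogt
  -- p^α bound
  have hpbound : (p:ℝ) ^ α ≤ (A ^ α)⁻¹ * (Real.log (t p)) ^ α := by
    have hple : (p:ℝ) ≤ Real.log (t p) / A := by
      rw [le_div_iff₀ hA0]; exact hpA
    have := Real.rpow_le_rpow (Nat.cast_nonneg p) hple (le_of_lt hα0)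
    rw [Real.div_rpow hlogt0 (le_of_lt hA0)] at this
    rw [div_eq_inv_mul] at this
    exact this
  -- κ^p bound
  have hκp : κ ^ p ≤ Real.sqrt B * (t p : ℝ) ^ (-(1:ℝ)/2) := by
    have hup : (t p : ℝ) ≤ B * K ^ p := by
      have := Lup p hp1
      linarith
    have hKpe : K ^ p = (κ ^ (2*p))⁻¹ := by
      rw [hKdef, inv_pow, ← pow_mul]
    have hκ2p : κ ^ (2*p) ≤ B / (t p : ℝ) := by
      rw [hKpe] at hup
      have hκpp : (0:ℝ) < κ ^ (2*p) := pow_pos hκ0 _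
      rw [le_div_iff₀ htp0]
      have h2 := mul_le_mul_of_nonneg_right hup (le_of_lt hκpp)
      rw [inv_mul_cancel_right₀ (ne_of_gt hκpp)] at h2
      linarith
    have hsq : κ ^ p ≤ Real.sqrt (B / (t p : ℝ)) := by
      rw [Real.le_sqrt (by positivity) (by positivity)]
      rw [← pow_mul, mul_comm]
      exact hκ2p
    have hrw : Real.sqrt (B / (t p : ℝ)) = Real.sqrt B * (t p : ℝ) ^ (-(1:ℝ)/2) := by
      rw [Real.sqrt_div (le_of_lt hB0)]
      rw [div_eq_mul_inv]
      congr 1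
      rw [Real.sqrt_eq_rpow, ← Real.rpow_neg (le_of_lt htp0)]
      norm_num
    rw [← hrw]
    exact hsq
  -- combine
  have hcle : c p ≤ (p:ℝ) ^ α := by
    rw [hc p hp1]; exact min_le_right _ _
  have hκpn : (0:ℝ) ≤ κ ^ p := le_of_lt (pow_pos hκ0 p)
  calc c p * κ ^ p ≤ (p:ℝ) ^ α * κ ^ p := mul_le_mul_of_nonneg_right hcle hκpn
    _ ≤ ((A ^ α)⁻¹ * (Real.log (t p)) ^ α) * (Real.sqrt B * (t p : ℝ) ^ (-(1:ℝ)/2)) := by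
        apply mul_le_mul hpbound hκp hκpn
        positivity
    _ = (A ^ α)⁻¹ * Real.sqrt B * (Real.log (t p)) ^ α * (t p : ℝ) ^ (-(1:ℝ)/2) := by ring
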